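/- Let V be a finite nonempty type and let p, q : V → ℝ be probability mass functions (p v ≥ 0, q v ≥ 0 for all v, and Σ_v p v = Σ_v q v = 1) with p v + q v > 0 for every v. Define, with the convention 0 · log x = 0, C(q) = Σ_v (p v · log(p v / (p v + q v)) + q v · log(q v / (p v + q v))). Then C(q) ≥ −log 4, and C(q) = −log 4 if and only if q = p. -/
import Mathlib

open Finset Real

/-- Gibbs-type inequality: `a - b ≤ a log(a/b)` for `a ≥ 0`, `b > 0`. -/
lemma gibbs_le (a b : ℝ) (ha : 0 ≤ a) (hb : 0 < b) :
    a - b ≤ a * Real.log (a / b) := by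
  rcases eq_or_lt_of_le ha with h | h
  · simp [← h]; linarith
  · have hba : 0 < b / a := by positivity
    have := Real.log_le_sub_one_of_pos hba
    have hlog : Real.log (a / b) = - Real.log (b / a) := by
      rw [← Real.log_inv]; congr 1; field_simp
    rw [hlog]
    have h3 : a * Real.log (b / a) ≤ a * (b / a - 1) :=
      mul_le_mul_of_nonneg_left this ha
    have h4 : a * (b / a - 1) = b - a := by field_simp
    linarith

lemma gibbs_eq (a b : ℝ) (ha : 0 ≤ a) (hb : 0 < b)
    (h : a - b = a * Real.log (a / b)) : a = b := by
  rcases eq_or_lt_of_le ha with h0 | h0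
  · exfalso; rw [← h0] at h; simp at h; linarith
  · by_contra hne
    have hba : 0 < b / a := by positivity
    have hba1 : b / a ≠ 1 := by
      intro h1
      apply hne
      field_simp at h1
      linarith
    have hstrict := Real.log_lt_sub_one_of_pos hba hba1
    have hlog : Real.log (a / b) = - Real.log (b / a) := by
      rw [← Real.log_inv]; congr 1; field_simp
    rw [hlog] at h
    have h3 : a * Real.log (b / a) < a * (b / a - 1) :=
      mul_lt_mul_of_pos_left hstrict h0
    have h4 : a * (b / a - 1) = b - a := by field_simp
    linarith

lemma split_log (a c : ℝ) (ha : 0 ≤ a) (hc : 0 < c) :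
    a * Real.log (a / (c / 2)) = a * Real.log (a / c) + a * Real.log 2 := by
  rcases eq_or_lt_of_le ha with h0 | h0
  · simp [← h0]
  · have : a / (c / 2) = (a / c) * 2 := by field_simp
    rw [this, Real.log_mul (by positivity) two_ne_zero]
    ring

open Finset in
/-- The value of the objective at the optimal discriminator,
`C(q) = ∑ v, (p v · log (p v/(p v+q v)) + q v · log (q v/(p v+q v)))`,
satisfies `C(q) ≥ −log 4` with equality iff `q = p`. -/
theorem megan_global_optimum {V : Type*} [Fintype V] [Nonempty V]
    (p q : V → ℝ) (hp : ∀ v, 0 ≤ p v) (hq : ∀ v, 0 ≤ q v)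
    (hps : ∑ v, p v = 1) (hqs : ∑ v, q v = 1)
    (hpq : ∀ v, 0 < p v + q v) :
    -Real.log 4 ≤
      ∑ v, (p v * Real.log (p v / (p v + q v)) + q v * Real.log (q v / (p v + q v))) ∧
    (∑ v, (p v * Real.log (p v / (p v + q v)) + q v * Real.log (q v / (p v + q v))) =
        -Real.log 4 ↔ q = p) := by
  set C := ∑ v, (p v * Real.log (p v / (p v + q v)) + q v * Real.log (q v / (p v + q v)))
    with hC
  have hlog4 : Real.log 4 = 2 * Real.log 2 := by
    have : (4 : ℝ) = 2 ^ 2 := by norm_num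
    rw [this, Real.log_pow]; push_cast; ring
  -- the shifted term
  set g : V → ℝ := fun v =>
    p v * Real.log (p v / (p v + q v)) + q v * Real.log (q v / (p v + q v))
      + (p v + q v) * Real.log 2 with hg
  have hgsum : ∑ v, g v = C + Real.log 4 := by
    rw [hg, hC]
    have h2 : ∑ v, (p v + q v) = 2 := by
      rw [Finset.sum_add_distrib, hps, hqs]; norm_num
    rw [Finset.sum_add_distrib, ← Finset.sum_mul, h2, hlog4]
  -- rewrite g v using the midpoint m = (p+q)/2
  have hg_alt : ∀ v, g v = p v * Real.log (p v / ((p v + q v) / 2))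
      + q v * Real.log (q v / ((p v + q v) / 2)) := by
    intro v
    rw [split_log (p v) (p v + q v) (hp v) (hpq v),
        split_log (q v) (p v + q v) (hq v) (hpq v)]
    simp only [hg]; ring
  have hm : ∀ v, (0:ℝ) < (p v + q v) / 2 := fun v => by linarith [hpq v]
  have hg_nonneg : ∀ v, 0 ≤ g v := by
    intro v
    rw [hg_alt v]
    have h1 := gibbs_le (p v) ((p v + q v) / 2) (hp v) (hm v)
    have h2 := gibbs_le (q v) ((p v + q v) / 2) (hq v) (hm v)
    linarith
  have hge : -Real.log 4 ≤ C := by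
    have : 0 ≤ ∑ v, g v := Finset.sum_nonneg fun v _ => hg_nonneg v
    linarith [hgsum ▸ this]
  refine ⟨hge, ?_, ?_⟩
  · -- equality ⇒ q = p
    intro hCe
    have hsum0 : ∑ v, g v = 0 := by rw [hgsum, hCe]; ring
    have hzero : ∀ v ∈ Finset.univ, g v = 0 :=
      (Finset.sum_eq_zero_iff_of_nonneg (fun v _ => hg_nonneg v)).mp hsum0
    funext v
    have hz := hzero v (Finset.mem_univ v)
    rw [hg_alt v] at hz
    have h1 := gibbs_le (p v) ((p v + q v) / 2) (hp v) (hm v)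
    have h2 := gibbs_le (q v) ((p v + q v) / 2) (hq v) (hm v)
    have e1 : p v - (p v + q v) / 2 = p v * Real.log (p v / ((p v + q v) / 2)) := by
      linarith
    have := gibbs_eq (p v) ((p v + q v) / 2) (hp v) (hm v) e1
    linarith
  · -- q = p ⇒ equality
    intro hqp
    simp only [hC]
    rw [hqp]
    have hterm : ∀ v, p v * Real.log (p v / (p v + p v)) + p v * Real.log (p v / (p v + p v))
        = -(2 * (p v * Real.log 2)) := by
      intro v
      rcases eq_or_lt_of_le (hp v) with h0 | h0
      · simp [← h0]
      · have : p v / (p v + p v) = 2⁻¹ := by field_simp; ring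
        rw [this, Real.log_inv]
        ring
    calc ∑ v, (p v * Real.log (p v / (p v + p v)) + p v * Real.log (p v / (p v + p v)))
        = ∑ v, -(2 * (p v * Real.log 2)) := Finset.sum_congr rfl fun v _ => hterm v
      _ = -(2 * Real.log 2) * ∑ v, p v := by
          rw [Finset.mul_sum]
          exact Finset.sum_congr rfl fun v _ => by ring
      _ = -Real.log 4 := by rw [hps, hlog4]; ring
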